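/- arXiv:1305.1314 — 6 statements merged into one kernel-verified Lean document; each statement's English description precedes it below -/
import Mathlib

section
/- For all nonnegative integers a, b, c, the product H(a+b) · H(a+c) · H(b+c) divides the product H(a) · H(b) · H(c) · H(a+b+c), where H(n) = ∏_{i=0}^{n-1} i! is the hyperfactorial. In other words, MacMahon's number Mac(a,b,c) = H(a)H(b)H(c)H(a+b+c) / (H(a+b)H(a+c)H(b+c)) is a nonnegative integer. -/
/-- The hyperfactorial `H(n) = ∏_{i=0}^{n-1} i!`. -/
def hyperfac (n : ℕ) : ℕ := ∏ i ∈ Finset.range n, Nat.factorial i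

namespace MacAux

/-- `T m x c = ∑_{j<c} ⌊(x+j)/m⌋`. -/
def T (m x c : ℕ) : ℕ := ∑ j ∈ Finset.range c, (x + j) / m

lemma T_add_right (m x c d : ℕ) : T m x (c + d) = T m x c + T m (x + c) d := by
  unfold T
  rw [Finset.sum_range_add]
  congr 1
  exact Finset.sum_congr rfl fun j _ => by rw [Nat.add_assoc]

lemma T_shift (m x c : ℕ) (hm : 0 < m) : T m (x + m) c = T m x c + c := by
  unfold T
  have : ∀ j ∈ Finset.range c, (x + m + j) / m = (x + j) / m + 1 := by
    intro j _
    rw [show x + m + j = x + j + m from by omega, Nat.add_div_right _ hm]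
  rw [Finset.sum_congr rfl this, Finset.sum_add_distrib, Finset.sum_const, Finset.card_range,
    smul_eq_mul, mul_one]

lemma T_full (m : ℕ) (hm : 0 < m) : ∀ x, T m x m = x := by
  intro x
  induction x with
  | zero =>
    unfold T
    exact Finset.sum_eq_zero fun j hj => Nat.div_eq_of_lt (by simpa using hj)
  | succ x ih =>
    have h1 : T m x (m + 1) = x / m + T m (x + 1) m := by
      unfold T
      rw [Finset.sum_range_succ']
      rw [Nat.add_comm]
      congr 1
      exact Finset.sum_congr rfl fun j _ => by rw [show x + (j + 1) = x + 1 + j from by omega]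
    have h2 : T m x (m + 1) = T m x m + (x + m) / m := by
      unfold T; rw [Finset.sum_range_succ]
    have h3 : (x + m) / m = x / m + 1 := Nat.add_div_right _ hm
    omega

lemma T_small (m a : ℕ) (hm : 0 < m) (ha : a < m) :
    ∀ c, c ≤ m → T m a c = a + c - min m (a + c) := by
  intro c
  induction c with
  | zero => intro _; simp [T]; omega
  | succ c ih =>
    intro hc
    have hc' : c ≤ m := by omega
    have h1 : T m a (c + 1) = T m a c + (a + c) / m := by
      unfold T; rw [Finset.sum_range_succ]
    have h2 : (a + c) / m = if a + c < m then 0 else 1 := by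
      split
      · exact Nat.div_eq_of_lt (by omega)
      · rw [Nat.div_eq_sub_div hm (by omega), Nat.div_eq_of_lt (by omega)]
    have := ih hc'
    split at h2 <;> omega

lemma core (m : ℕ) (hm : 0 < m) :
    ∀ n a b c : ℕ, a + b + c ≤ n → T m a c + T m b c ≤ T m 0 c + T m (a + b) c := by
  intro n
  induction n with
  | zero =>
    intro a b c h
    have : c = 0 := by omega
    subst this
    simp [T]
  | succ n ih =>
    intro a b c h
    by_cases hc : m ≤ c
    · obtain ⟨c', rfl⟩ : ∃ c', c = c' + m := ⟨c - m, by omega⟩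
      have key : ∀ x, T m x (c' + m) = T m x c' + (x + c') := by
        intro x; rw [T_add_right, T_full m hm]
      rw [key a, key b, key 0, key (a + b)]
      have := ih a b c' (by omega)
      omega
    by_cases ha : m ≤ a
    · obtain ⟨a', rfl⟩ : ∃ a', a = a' + m := ⟨a - m, by omega⟩
      rw [T_shift m a' c hm, show a' + m + b = a' + b + m from by omega,
        T_shift m (a' + b) c hm]
      have := ih a' b c (by omega)
      omega
    by_cases hb : m ≤ b
    · obtain ⟨b', rfl⟩ : ∃ b', b = b' + m := ⟨b - m, by omega⟩
      rw [T_shift m b' c hm, show a + (b' + m) = a + b' + m from by omega,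
        T_shift m (a + b') c hm]
      have := ih a b' c (by omega)
      omega
    · have hTa := T_small m a hm (by omega) c (by omega)
      have hTb := T_small m b hm (by omega) c (by omega)
      have hT0 := T_small m 0 hm hm c (by omega)
      by_cases hab : a + b < m
      · have hTab := T_small m (a + b) hm hab c (by omega)
        omega
      · obtain ⟨d, hd⟩ : ∃ d, a + b = d + m := ⟨a + b - m, by omega⟩
        rw [hd, T_shift m d c hm]
        have hTd := T_small m d hm (by omega) c (by omega)
        omega

lemma main_ineq (m a b c : ℕ) :
    T m 0 (a + b) + T m 0 (a + c) + T m 0 (b + c) ≤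
      T m 0 a + T m 0 b + T m 0 c + T m 0 (a + b + c) := by
  rcases Nat.eq_zero_or_pos m with rfl | hm
  · simp [T]
  have h1 : T m 0 (a + b) = T m 0 a + T m a b := by
    rw [T_add_right]; simp
  have h2 : T m 0 (a + c) = T m 0 a + T m a c := by
    rw [T_add_right]; simp
  have h3 : T m 0 (b + c) = T m 0 b + T m b c := by
    rw [T_add_right]; simp
  have h4 : T m 0 (a + b + c) = T m 0 (a + b) + T m (a + b) c := by
    rw [T_add_right]; simp
  have h5 := core m hm (a + b + c) a b c le_rfl
  omega

lemma hyperfac_ne_zero (n : ℕ) : hyperfac n ≠ 0 :=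
  (Finset.prod_pos fun i _ => Nat.factorial_pos i).ne'

lemma hyperfac_fact (p n : ℕ) :
    (hyperfac n).factorization p = ∑ i ∈ Finset.range n, (Nat.factorial i).factorization p := by
  unfold hyperfac
  rw [Nat.factorization_prod fun i _ => (Nat.factorial_pos i).ne']
  simp [Finset.sum_apply']

lemma hyperfac_fact_prime {p : ℕ} (hp : p.Prime) (n B : ℕ) (hn : n ≤ B) :
    (hyperfac n).factorization p = ∑ k ∈ Finset.Ico 1 B, T (p ^ k) 0 n := by
  haveI : Fact p.Prime := ⟨hp⟩
  rw [hyperfac_fact]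
  have h1 : ∀ i ∈ Finset.range n, (Nat.factorial i).factorization p =
      ∑ k ∈ Finset.Ico 1 B, i / p ^ k := by
    intro i hi
    rw [Nat.factorization_def _ hp]
    exact padicValNat_factorial (lt_of_le_of_lt (Nat.log_le_self p i)
      (by simp at hi; omega))
  rw [Finset.sum_congr rfl h1, Finset.sum_comm]
  exact Finset.sum_congr rfl fun k _ => by simp [T]

end MacAux

/-- MacMahon's number `Mac(a,b,c)` is an integer: the denominator
`H(a+b)H(a+c)H(b+c)` divides the numerator `H(a)H(b)H(c)H(a+b+c)`. -/
theorem mac_is_integer (a b c : ℕ) :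
    hyperfac (a + b) * hyperfac (a + c) * hyperfac (b + c) ∣
      hyperfac a * hyperfac b * hyperfac c * hyperfac (a + b + c) := by
  open MacAux in
  have hL : hyperfac (a + b) * hyperfac (a + c) * hyperfac (b + c) ≠ 0 :=
    mul_ne_zero (mul_ne_zero (hyperfac_ne_zero _) (hyperfac_ne_zero _)) (hyperfac_ne_zero _)
  have hR : hyperfac a * hyperfac b * hyperfac c * hyperfac (a + b + c) ≠ 0 :=
    mul_ne_zero (mul_ne_zero (mul_ne_zero (hyperfac_ne_zero _) (hyperfac_ne_zero _))
      (hyperfac_ne_zero _)) (hyperfac_ne_zero _)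
  rw [← Nat.factorization_le_iff_dvd hL hR]
  rw [Finsupp.le_def]
  intro p
  rw [Nat.factorization_mul (mul_ne_zero (hyperfac_ne_zero _) (hyperfac_ne_zero _))
      (hyperfac_ne_zero _),
    Nat.factorization_mul (hyperfac_ne_zero _) (hyperfac_ne_zero _),
    Nat.factorization_mul (mul_ne_zero (mul_ne_zero (hyperfac_ne_zero _) (hyperfac_ne_zero _))
      (hyperfac_ne_zero _)) (hyperfac_ne_zero _),
    Nat.factorization_mul (mul_ne_zero (hyperfac_ne_zero _) (hyperfac_ne_zero _))
      (hyperfac_ne_zero _),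
    Nat.factorization_mul (hyperfac_ne_zero _) (hyperfac_ne_zero _)]
  simp only [Finsupp.add_apply]
  by_cases hp : p.Prime
  · set B := a + b + c + 1 with hB
    rw [hyperfac_fact_prime hp (a + b) B (by omega),
      hyperfac_fact_prime hp (a + c) B (by omega),
      hyperfac_fact_prime hp (b + c) B (by omega),
      hyperfac_fact_prime hp a B (by omega),
      hyperfac_fact_prime hp b B (by omega),
      hyperfac_fact_prime hp c B (by omega),
      hyperfac_fact_prime hp (a + b + c) B (by omega)]
    rw [← Finset.sum_add_distrib, ← Finset.sum_add_distrib, ← Finset.sum_add_distrib,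
      ← Finset.sum_add_distrib, ← Finset.sum_add_distrib]
    exact Finset.sum_le_sum fun k _ => main_ineq (p ^ k) a b c
  · simp [Nat.factorization_eq_zero_of_not_prime _ hp]
end

section
/- Let a, b, c be positive integers and let p be a prime with p ≥ a + b + c. Then p does not divide Mac(a, b, c) = H(a)H(b)H(c)H(a+b+c)/(H(a+b)H(a+c)H(b+c)). Equivalently, every prime divisor of Mac(a,b,c) is at most a+b+c-1. -/
/-- MacMahon's number `Mac(a,b,c)`. -/
def mac (a b c : ℕ) : ℕ :=
  hyperfac a * hyperfac b * hyperfac c * hyperfac (a + b + c) /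
    (hyperfac (a + b) * hyperfac (a + c) * hyperfac (b + c))

namespace MacAux

/-- `S m n = ∑_{i<n} ⌊i/m⌋`. -/
def S (m n : ℕ) : ℕ := ∑ i ∈ Finset.range n, i / m

lemma S_closed (m n : ℕ) :
    (2 * (m : ℤ) * S m n : ℤ) =
      (n : ℤ) * n - m * n + ((n % m : ℕ) : ℤ) * ((m : ℤ) - ((n % m : ℕ) : ℤ)) := by
  rcases Nat.eq_zero_or_pos m with hm | hm
  · subst hm; simp [S, Nat.mod_zero]
  induction n with
  | zero => simp [S]
  | succ n ih =>
    rw [S, Finset.sum_range_succ, ← S]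
    have hq : m * (n / m) + n % m = n := Nat.div_add_mod n m
    have hrm : n % m < m := Nat.mod_lt _ hm
    rcases Nat.lt_or_ge (n % m + 1) m with h | h
    · have hmod : (n + 1) % m = n % m + 1 := by
        have h2 : n + 1 = m * (n / m) + (n % m + 1) := by omega
        rw [h2, Nat.mul_add_mod, Nat.mod_eq_of_lt h]
      rw [hmod]
      have hqz : (n : ℤ) = (m : ℤ) * (n / m : ℕ) + ((n % m : ℕ) : ℤ) := by exact_mod_cast hq.symm
      simp only [Nat.cast_add, Nat.cast_one]
      linear_combination ih - 2 * hqz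
    · have hrm1 : n % m + 1 = m := by omega
      have hmod : (n + 1) % m = 0 := by
        have h2 : n + 1 = m * (n / m) + m := by omega
        rw [h2, Nat.mul_add_mod, Nat.mod_self]
      rw [hmod]
      have hqz : (n : ℤ) = (m : ℤ) * (n / m : ℕ) + ((n % m : ℕ) : ℤ) := by exact_mod_cast hq.symm
      have hrz : ((n % m : ℕ) : ℤ) + 1 = m := by exact_mod_cast hrm1
      simp only [Nat.cast_add, Nat.cast_one, Nat.cast_zero]
      linear_combination ih - 2 * hqz - (((n % m : ℕ) : ℤ) + 1) * hrz

set_option maxHeartbeats 1000000 in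
/-- The key remainder inequality. -/
lemma g_ineq (m x y z xy xz yz s : ℤ) (hm : 0 < m)
    (hx : 0 ≤ x) (hx' : x < m) (hy : 0 ≤ y) (hy' : y < m) (hz : 0 ≤ z) (hz' : z < m)
    (hxy : xy = x + y ∨ xy = x + y - m) (hxy0 : 0 ≤ xy) (hxy' : xy < m)
    (hxz : xz = x + z ∨ xz = x + z - m) (hxz0 : 0 ≤ xz) (hxz' : xz < m)
    (hyz : yz = y + z ∨ yz = y + z - m) (hyz0 : 0 ≤ yz) (hyz' : yz < m)
    (hs : s = x + y + z ∨ s = x + y + z - m ∨ s = x + y + z - 2 * m)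
    (hs0 : 0 ≤ s) (hs' : s < m) :
    xy * (m - xy) + xz * (m - xz) + yz * (m - yz) ≤
      x * (m - x) + y * (m - y) + z * (m - z) + s * (m - s) := by
  rcases hxy with h1 | h1 <;> rcases hxz with h2 | h2 <;> rcases hyz with h3 | h3 <;>
    rcases hs with h4 | h4 | h4 <;> subst h1 h2 h3 h4 <;>
    nlinarith [mul_nonneg hx hy, mul_nonneg hx hz, mul_nonneg hy hz]

lemma mod_two_cases (m u : ℕ) (hm : 0 < m) (hu : u < 2 * m) :
    u % m = u ∨ u % m + m = u := by
  rcases Nat.lt_or_ge u m with h | h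
  · left; exact Nat.mod_eq_of_lt h
  · right
    have h2 : u % m = u - m := by
      rw [Nat.mod_eq_sub_mod h, Nat.mod_eq_of_lt (by omega)]
    omega

lemma mod_three_cases (m u : ℕ) (hm : 0 < m) (hu : u < 3 * m) :
    u % m = u ∨ u % m + m = u ∨ u % m + 2 * m = u := by
  rcases Nat.lt_or_ge u m with h | h
  · left; exact Nat.mod_eq_of_lt h
  rcases Nat.lt_or_ge u (2 * m) with h2 | h2
  · right; left
    have h3 : u % m = u - m := by
      rw [Nat.mod_eq_sub_mod h, Nat.mod_eq_of_lt (by omega)]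
    omega
  · right; right
    have h3 : u % m = u - 2 * m := by
      rw [Nat.mod_eq_sub_mod h, Nat.mod_eq_sub_mod (by omega), Nat.mod_eq_of_lt (by omega)]
      omega
    omega

set_option maxHeartbeats 1000000 in
/-- The key floor-sum inequality. -/
lemma S_ineq (m a b c : ℕ) :
    S m (a + b) + S m (a + c) + S m (b + c) ≤ S m a + S m b + S m c + S m (a + b + c) := by
  rcases Nat.eq_zero_or_pos m with hm | hm
  · subst hm; simp [S, Nat.div_zero]
  have hab : (a + b) % m = (a % m + b % m) % m := by rw [Nat.add_mod]
  have hac : (a + c) % m = (a % m + c % m) % m := by rw [Nat.add_mod]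
  have hbc : (b + c) % m = (b % m + c % m) % m := by rw [Nat.add_mod]
  have habc : (a + b + c) % m = (a % m + b % m + c % m) % m := by
    conv_lhs => rw [Nat.add_mod, Nat.add_mod a b]
    rw [Nat.mod_add_mod]
  have hxa : a % m < m := Nat.mod_lt _ hm
  have hxb : b % m < m := Nat.mod_lt _ hm
  have hxc : c % m < m := Nat.mod_lt _ hm
  have c1 : (a + b) % m = a % m + b % m ∨ (a + b) % m + m = a % m + b % m := by
    rw [hab]; exact mod_two_cases m _ hm (by omega)
  have c2 : (a + c) % m = a % m + c % m ∨ (a + c) % m + m = a % m + c % m := by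
    rw [hac]; exact mod_two_cases m _ hm (by omega)
  have c3 : (b + c) % m = b % m + c % m ∨ (b + c) % m + m = b % m + c % m := by
    rw [hbc]; exact mod_two_cases m _ hm (by omega)
  have c4 : (a + b + c) % m = a % m + b % m + c % m ∨
      (a + b + c) % m + m = a % m + b % m + c % m ∨
      (a + b + c) % m + 2 * m = a % m + b % m + c % m := by
    rw [habc]; exact mod_three_cases m _ hm (by omega)
  have key : (2 * (m : ℤ) * ((S m (a + b) : ℤ) + (S m (a + c) : ℤ) + (S m (b + c) : ℤ)) ≤
      2 * (m : ℤ) * ((S m a : ℤ) + (S m b : ℤ) + (S m c : ℤ) + (S m (a + b + c) : ℤ))) := by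
    have e1 := S_closed m a
    have e2 := S_closed m b
    have e3 := S_closed m c
    have e4 := S_closed m (a + b + c)
    have e5 := S_closed m (a + b)
    have e6 := S_closed m (a + c)
    have e7 := S_closed m (b + c)
    have gkey := g_ineq (m : ℤ) ((a % m : ℕ) : ℤ) ((b % m : ℕ) : ℤ) ((c % m : ℕ) : ℤ)
      (((a + b) % m : ℕ) : ℤ) (((a + c) % m : ℕ) : ℤ) (((b + c) % m : ℕ) : ℤ)
      (((a + b + c) % m : ℕ) : ℤ)
      (by exact_mod_cast hm)
      (Int.natCast_nonneg _) (by exact_mod_cast hxa)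
      (Int.natCast_nonneg _) (by exact_mod_cast hxb)
      (Int.natCast_nonneg _) (by exact_mod_cast hxc)
      (by rcases c1 with h | h
          · left; exact_mod_cast h
          · right
            have h' : (((a + b) % m : ℕ) : ℤ) + m = ((a % m : ℕ) : ℤ) + ((b % m : ℕ) : ℤ) := by
              exact_mod_cast h
            linarith)
      (Int.natCast_nonneg _) (by exact_mod_cast Nat.mod_lt (a + b) hm)
      (by rcases c2 with h | h
          · left; exact_mod_cast h
          · right
            have h' : (((a + c) % m : ℕ) : ℤ) + m = ((a % m : ℕ) : ℤ) + ((c % m : ℕ) : ℤ) := by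
              exact_mod_cast h
            linarith)
      (Int.natCast_nonneg _) (by exact_mod_cast Nat.mod_lt (a + c) hm)
      (by rcases c3 with h | h
          · left; exact_mod_cast h
          · right
            have h' : (((b + c) % m : ℕ) : ℤ) + m = ((b % m : ℕ) : ℤ) + ((c % m : ℕ) : ℤ) := by
              exact_mod_cast h
            linarith)
      (Int.natCast_nonneg _) (by exact_mod_cast Nat.mod_lt (b + c) hm)
      (by rcases c4 with h | h | h
          · left; exact_mod_cast h
          · right; left
            have h' : (((a + b + c) % m : ℕ) : ℤ) + m =
                ((a % m : ℕ) : ℤ) + ((b % m : ℕ) : ℤ) + ((c % m : ℕ) : ℤ) := by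
              exact_mod_cast h
            linarith
          · right; right
            have h' : (((a + b + c) % m : ℕ) : ℤ) + 2 * m =
                ((a % m : ℕ) : ℤ) + ((b % m : ℕ) : ℤ) + ((c % m : ℕ) : ℤ) := by
              exact_mod_cast h
            linarith)
      (Int.natCast_nonneg _) (by exact_mod_cast Nat.mod_lt (a + b + c) hm)
    simp only [Nat.cast_add] at e4 e5 e6 e7
    linarith [e1, e2, e3, e4, e5, e6, e7, gkey]
  have h2m : (0 : ℤ) < 2 * m := by positivity
  have hfin := le_of_mul_le_mul_left key h2m
  exact_mod_cast hfin

lemma factorization_hyperfac {q : ℕ} (hq : q.Prime) (n B : ℕ) (hnB : n ≤ B) :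
    (hyperfac n).factorization q = ∑ j ∈ Finset.Ico 1 B, S (q ^ j) n := by
  haveI : Fact q.Prime := ⟨hq⟩
  rw [hyperfac, Nat.factorization_prod (fun i _ => Nat.factorial_ne_zero i)]
  rw [Finset.sum_apply']
  have hterm : ∀ i ∈ Finset.range n,
      (Nat.factorial i).factorization q = ∑ j ∈ Finset.Ico 1 B, i / q ^ j := by
    intro i hi
    rw [Finset.mem_range] at hi
    rw [Nat.factorization_def _ hq]
    exact padicValNat_factorial (lt_of_le_of_lt (Nat.log_le_self q i) (by omega))
  rw [Finset.sum_congr rfl hterm, Finset.sum_comm]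
  rfl

lemma den_dvd_num (a b c : ℕ) :
    hyperfac (a + b) * hyperfac (a + c) * hyperfac (b + c) ∣
      hyperfac a * hyperfac b * hyperfac c * hyperfac (a + b + c) := by
  have hne : ∀ n : ℕ, hyperfac n ≠ 0 := hyperfac_ne_zero
  rw [← Nat.factorization_le_iff_dvd
    (mul_ne_zero (mul_ne_zero (hne _) (hne _)) (hne _))
    (mul_ne_zero (mul_ne_zero (mul_ne_zero (hne _) (hne _)) (hne _)) (hne _))]
  rw [Nat.factorization_mul (mul_ne_zero (hne _) (hne _)) (hne _),
    Nat.factorization_mul (hne _) (hne _),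
    Nat.factorization_mul (mul_ne_zero (mul_ne_zero (hne _) (hne _)) (hne _)) (hne _),
    Nat.factorization_mul (mul_ne_zero (hne _) (hne _)) (hne _),
    Nat.factorization_mul (hne _) (hne _)]
  intro q
  simp only [Finsupp.coe_add, Pi.add_apply]
  by_cases hq : q.Prime
  · set B := a + b + c + 1 with hB
    rw [factorization_hyperfac hq a B (by omega), factorization_hyperfac hq b B (by omega),
      factorization_hyperfac hq c B (by omega), factorization_hyperfac hq (a + b) B (by omega),
      factorization_hyperfac hq (a + c) B (by omega),
      factorization_hyperfac hq (b + c) B (by omega),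
      factorization_hyperfac hq (a + b + c) B (by omega)]
    have key := Finset.sum_le_sum (s := Finset.Ico 1 B)
      (f := fun j => S (q ^ j) (a + b) + S (q ^ j) (a + c) + S (q ^ j) (b + c))
      (g := fun j => S (q ^ j) a + S (q ^ j) b + S (q ^ j) c + S (q ^ j) (a + b + c))
      (fun j _ => S_ineq (q ^ j) a b c)
    simpa only [Finset.sum_add_distrib] using key
  · simp [Nat.factorization_eq_zero_of_not_prime _ hq]

lemma not_prime_dvd_hyperfac {p n : ℕ} (hp : p.Prime) (hnp : n ≤ p) : ¬ p ∣ hyperfac n := by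
  intro h
  obtain ⟨i, hi, hdvd⟩ := hp.prime.exists_mem_finset_dvd h
  rw [Finset.mem_range] at hi
  have := (Nat.Prime.dvd_factorial hp).mp hdvd
  omega

end MacAux

/-- If `a, b, c` are positive and `p` is a prime with `p ≥ a + b + c`,
then `p` does not divide `Mac(a,b,c)`. -/
theorem mac_prime_divisors_lt (a b c p : ℕ) (ha : 0 < a) (hb : 0 < b) (hc : 0 < c)
    (hp : p.Prime) (hge : a + b + c ≤ p) : ¬ p ∣ mac a b c := by
  intro hdvd
  have hdd := MacAux.den_dvd_num a b c
  have hmac : mac a b c * (hyperfac (a + b) * hyperfac (a + c) * hyperfac (b + c)) =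
      hyperfac a * hyperfac b * hyperfac c * hyperfac (a + b + c) :=
    Nat.div_mul_cancel hdd
  have hnum : p ∣ hyperfac a * hyperfac b * hyperfac c * hyperfac (a + b + c) := by
    rw [← hmac]; exact hdvd.mul_right _
  rcases (hp.dvd_mul.mp hnum) with h | h
  · rcases (hp.dvd_mul.mp h) with h | h
    · rcases (hp.dvd_mul.mp h) with h | h
      · exact MacAux.not_prime_dvd_hyperfac hp (by omega) h
      · exact MacAux.not_prime_dvd_hyperfac hp (by omega) h
    · exact MacAux.not_prime_dvd_hyperfac hp (by omega) h
  · exact MacAux.not_prime_dvd_hyperfac hp hge h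
end

section
/- Let K be an infinite field of arbitrary characteristic and let R = K[x,y] be the polynomial ring in two variables. Then every Artinian standard graded quotient R/I by a homogeneous ideal I has the weak Lefschetz property: there exists a linear form ℓ ∈ [R]₁ such that for every integer d, the multiplication map ×ℓ : [R/I]_d → [R/I]_{d+1} has maximal rank (i.e., is injective or surjective). -/
open MvPolynomial

namespace WlpAux


variable {K : Type*} [Field K]

lemma degree_fin2 (d : Fin 2 →₀ ℕ) : d.degree = d 0 + d 1 := by
  show ∑ i ∈ d.support, d i = d 0 + d 1
  rw [Finset.sum_subset (Finset.subset_univ d.support)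
    (fun x _ hx => Finsupp.notMem_support_iff.mp hx), Fin.sum_univ_two]

lemma isHom_iff (p : MvPolynomial (Fin 2) K) (n : ℕ) :
    p.IsHomogeneous n ↔ ∀ d : Fin 2 →₀ ℕ, coeff d p ≠ 0 → d 0 + d 1 = n := by
  constructor
  · intro h d hd
    have e : d.degree = Finsupp.weight 1 d := DFunLike.congr_fun Finsupp.degree_eq_weight_one d
    rw [← degree_fin2, e]
    exact h hd
  · intro h d hd
    show Finsupp.weight 1 d = n
    rw [show Finsupp.weight 1 d = d.degree from (DFunLike.congr_fun Finsupp.degree_eq_weight_one d).symm, degree_fin2]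
    exact h d hd

lemma cancel_X1 {q : MvPolynomial (Fin 2) K} {n : ℕ}
    (h : (X 1 * q).IsHomogeneous (n + 1)) : q.IsHomogeneous n := by
  rw [isHom_iff] at h ⊢
  intro d hd
  have h2 := h (Finsupp.single 1 1 + d) (by rw [coeff_X_mul]; exact hd)
  simp [Finsupp.add_apply, Finsupp.single_apply] at h2
  omega

lemma X1_factor {p : MvPolynomial (Fin 2) K} {n : ℕ}
    (hp : p.IsHomogeneous (n + 1)) (h0 : coeff (Finsupp.single 0 (n + 1)) p = 0) :
    ∃ q, p = X 1 * q := by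
  refine ⟨p.divMonomial (Finsupp.single 1 1), ?_⟩
  have hm : p.modMonomial (Finsupp.single 1 1) = 0 := by
    ext s
    rw [coeff_zero]
    by_cases hle : Finsupp.single (1 : Fin 2) 1 ≤ s
    · exact coeff_modMonomial_of_le p hle
    · rw [coeff_modMonomial_of_not_le p hle]
      have hs1 : s 1 = 0 := by
        by_contra h
        exact hle (Finsupp.single_le_iff.mpr (Nat.one_le_iff_ne_zero.mpr h))
      by_contra hc
      have hdeg := (isHom_iff _ _).mp hp s hc
      have hse : s = Finsupp.single 0 (n + 1) := by
        ext i; fin_cases i <;> simp [Finsupp.single_apply] <;> omega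
      rw [hse] at hc
      exact hc h0
  conv_lhs => rw [← modMonomial_add_divMonomial_single p 1]
  rw [hm, zero_add]

lemma ell_hom (u v : K) :
    (C v * X 0 - C u * X 1 : MvPolynomial (Fin 2) K).IsHomogeneous 1 :=
  ((isHomogeneous_X K 0).C_mul v).sub ((isHomogeneous_X K 1).C_mul u)

lemma ell_ne_zero (u : K) {v : K} (hv : v ≠ 0) :
    (C v * X 0 - C u * X 1 : MvPolynomial (Fin 2) K) ≠ 0 := by
  intro h
  apply hv
  have := congrArg (coeff (Finsupp.single (0 : Fin 2) 1)) h
  simpa [coeff_X', Finsupp.single_eq_single_iff] using this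


lemma factor (u : K) {v : K} (hv : v ≠ 0) :
    ∀ (n : ℕ) (p : MvPolynomial (Fin 2) K), p.IsHomogeneous n →
      eval (fun i : Fin 2 => if i = 0 then u else v) p = 0 →
      ∃ f : MvPolynomial (Fin 2) K, f.IsHomogeneous (n - 1) ∧
        p = (C v * X 0 - C u * X 1) * f := by
  intro n
  induction n with
  | zero =>
    intro p hp he
    have hpc : p = C (coeff 0 p) := by
      ext d
      by_cases hd : d = 0
      · simp [hd]
      · rw [hp.coeff_eq_zero (by simpa [Finsupp.degree_eq_zero_iff] using hd)]
        simp [coeff_C, Ne.symm hd]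
    rw [hpc] at he ⊢
    simp only [eval_C] at he
    exact ⟨0, isHomogeneous_zero _ _ _, by rw [he]; simp⟩
  | succ n ih =>
    intro p hp he
    have hℓhom := ell_hom u v
    set c := coeff (Finsupp.single (0 : Fin 2) (n + 1)) p with hc
    set p₁ := p - C (c / v) * ((C v * X 0 - C u * X 1) * X 0 ^ n) with hp₁def
    have hterm : (C (c / v) * ((C v * X 0 - C u * X 1) * X 0 ^ n) :
        MvPolynomial (Fin 2) K).IsHomogeneous (n + 1) := by
      have := (hℓhom.mul (isHomogeneous_X_pow (R := K) (0 : Fin 2) n)).C_mul (c / v)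
      rwa [Nat.add_comm] at this
    have hp₁hom : p₁.IsHomogeneous (n + 1) := hp.sub hterm
    have hcoeff : coeff (Finsupp.single (0 : Fin 2) (n + 1)) p₁ = 0 := by
      have e1 : ((C v * X 0 - C u * X 1) * X 0 ^ n : MvPolynomial (Fin 2) K)
          = C v * X 0 ^ (n + 1) - C u * (X 0 ^ n * X 1) := by ring
      rw [hp₁def, coeff_sub, coeff_C_mul]
      rw [e1, coeff_sub, coeff_C_mul, coeff_C_mul, coeff_mul_X']
      simp only [Finsupp.mem_support_iff, Finsupp.single_apply]
      norm_num
      rw [coeff_X_pow]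
      simp [div_mul_cancel₀, hv, hc]
    obtain ⟨q, hq⟩ := X1_factor hp₁hom hcoeff
    have hqhom : q.IsHomogeneous n := cancel_X1 (hq ▸ hp₁hom)
    have hevℓ : eval (fun i : Fin 2 => if i = 0 then u else v)
        (C v * X 0 - C u * X 1) = 0 := by
      simp [mul_comm]
    have heq : eval (fun i : Fin 2 => if i = 0 then u else v) q = 0 := by
      have h2 : eval (fun i : Fin 2 => if i = 0 then u else v) p₁ = 0 := by
        rw [hp₁def]
        simp [he, hevℓ]
      rw [hq] at h2
      simp only [eval_mul, eval_X] at h2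
      simp only [if_neg (by norm_num : ¬(1 : Fin 2) = 0)] at h2
      exact (mul_eq_zero.mp h2).resolve_left hv
    obtain ⟨f', hf'hom, hf'⟩ := ih q hqhom heq
    have hX1f' : (X 1 * f' : MvPolynomial (Fin 2) K).IsHomogeneous n := by
      cases n with
      | zero =>
        by_cases hf0 : f' = 0
        · rw [hf0, mul_zero]; exact isHomogeneous_zero _ _ _
        · exfalso
          have hq0 : q ≠ 0 := by
            rw [hf']
            exact mul_ne_zero (ell_ne_zero u hv) hf0
          have h1 : q.IsHomogeneous 1 := by
            rw [hf']
            simpa using hℓhom.mul hf'hom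
          exact absurd (hqhom.inj_right h1 hq0) (by norm_num)
      | succ m =>
        have := (isHomogeneous_X K (1 : Fin 2)).mul hf'hom
        simpa [Nat.add_comm] using this
    refine ⟨X 1 * f' + C (c / v) * X 0 ^ n, ?_, ?_⟩
    · have h2 : (C (c / v) * X 0 ^ n : MvPolynomial (Fin 2) K).IsHomogeneous n :=
        (isHomogeneous_X_pow (R := K) (0 : Fin 2) n).C_mul (c / v)
      simpa using hX1f'.add h2
    · have hrec : p = p₁ + C (c / v) * ((C v * X 0 - C u * X 1) * X 0 ^ n) := by
        rw [hp₁def]; ring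
      rw [hrec, hq, hf']; ring


end WlpAux

open WlpAux in

/-- Every Artinian standard graded quotient of `K[x,y]`, `K` an infinite field of
arbitrary characteristic, has the weak Lefschetz property: there is a linear
form `ℓ` such that for all `d` the multiplication `×ℓ : [R/I]_d → [R/I]_{d+1}`
is injective or surjective. -/
theorem wlp_two_variables (K : Type*) [Field K] [Infinite K]
    (I : Ideal (MvPolynomial (Fin 2) K))
    (hhom : ∀ f ∈ I, ∀ d : ℕ, homogeneousComponent d f ∈ I)
    (hart : ∃ N : ℕ, ∀ d : ℕ, N ≤ d → ∀ f : MvPolynomial (Fin 2) K,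
      f.IsHomogeneous d → f ∈ I) :
    ∃ ℓ : MvPolynomial (Fin 2) K, ℓ.IsHomogeneous 1 ∧
      ∀ d : ℕ,
        (∀ f : MvPolynomial (Fin 2) K, f.IsHomogeneous d → ℓ * f ∈ I → f ∈ I) ∨
        (∀ g : MvPolynomial (Fin 2) K, g.IsHomogeneous (d + 1) →
          ∃ f : MvPolynomial (Fin 2) K, f.IsHomogeneous d ∧ g - ℓ * f ∈ I) := by
  classical
  obtain ⟨N, hN⟩ := hart
  have hex : ∃ j : ℕ, ∃ F : MvPolynomial (Fin 2) K,
      F ≠ 0 ∧ F.IsHomogeneous j ∧ F ∈ I :=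
    ⟨N, X 0 ^ N, pow_ne_zero _ (X_ne_zero _),
      isHomogeneous_X_pow (R := K) (0 : Fin 2) N,
      hN N le_rfl _ (isHomogeneous_X_pow (R := K) (0 : Fin 2) N)⟩
  set s := Nat.find hex with hs
  obtain ⟨F, hF0, hFhom, hFI⟩ := Nat.find_spec hex
  have hmin : ∀ j, j < s → ∀ G : MvPolynomial (Fin 2) K,
      G.IsHomogeneous j → G ∈ I → G = 0 := by
    intro j hj G h1 h2
    by_contra h
    exact Nat.find_min hex hj ⟨G, h, h1, h2⟩
  -- find a good point
  have hG : (X 0 * X 1 * F : MvPolynomial (Fin 2) K) ≠ 0 :=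
    mul_ne_zero (mul_ne_zero (X_ne_zero _) (X_ne_zero _)) hF0
  obtain ⟨pt, hpt⟩ : ∃ x : Fin 2 → K, eval x (X 0 * X 1 * F) ≠ 0 := by
    by_contra h
    push_neg at h
    exact hG (MvPolynomial.funext fun x => by simpa using h x)
  rw [eval_mul, eval_mul, eval_X, eval_X] at hpt
  have hu : pt 0 ≠ 0 := fun h => hpt (by simp [h])
  have hv : pt 1 ≠ 0 := fun h => hpt (by simp [h])
  have hFe : eval pt F ≠ 0 := fun h => hpt (by simp [h])
  set u := pt 0 with hud
  set v := pt 1 with hvd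
  have hpt_eq : (fun i : Fin 2 => if i = 0 then u else v) = pt := by
    funext i; fin_cases i <;> simp <;> rfl
  refine ⟨C v * X 0 - C u * X 1, ell_hom u v, ?_⟩
  intro d
  by_cases hds : s ≤ d + 1
  · right
    intro g hg
    have hEe : eval pt (X 0 ^ (d + 1 - s) * F : MvPolynomial (Fin 2) K) ≠ 0 := by
      rw [eval_mul, eval_pow, eval_X]
      exact mul_ne_zero (pow_ne_zero _ hu) hFe
    set c := eval pt g / eval pt (X 0 ^ (d + 1 - s) * F : MvPolynomial (Fin 2) K) with hcd
    have hphom : (g - C c * (X 0 ^ (d + 1 - s) * F) :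
        MvPolynomial (Fin 2) K).IsHomogeneous (d + 1) := by
      refine hg.sub ?_
      have := ((isHomogeneous_X_pow (R := K) (0 : Fin 2) (d + 1 - s)).mul hFhom).C_mul c
      rwa [Nat.sub_add_cancel hds] at this
    have hpev : eval pt (g - C c * (X 0 ^ (d + 1 - s) * F)) = 0 := by
      rw [eval_sub, eval_mul, eval_C, hcd, div_mul_cancel₀ _ hEe, sub_self]
    rw [← hpt_eq] at hpev
    obtain ⟨f, hfhom, hfeq⟩ := factor u hv (d + 1) _ hphom hpev
    refine ⟨f, by simpa using hfhom, ?_⟩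
    have he2 : g - (C v * X 0 - C u * X 1) * f
        = C c * X 0 ^ (d + 1 - s) * F := by
      rw [← hfeq]; ring
    rw [he2]
    exact I.mul_mem_left _ hFI
  · left
    intro f hf hlf
    have hlfhom : ((C v * X 0 - C u * X 1) * f).IsHomogeneous (d + 1) := by
      have := (ell_hom u v).mul hf
      rwa [Nat.add_comm] at this
    have h0 := hmin (d + 1) (lt_of_not_ge hds) _ hlfhom hlf
    rcases mul_eq_zero.mp h0 with h | h
    · exact absurd h (ell_ne_zero u hv)
    · rw [h]; exact I.zero_mem
end

section
/- Let a₁ > a₂ ≥ 0, b₂ > b₁ ≥ 0, c ≥ 0 be integers. Then in the polynomial ring K[x,y,z] over a field K, the intersection of monomial ideals satisfies (x^{a₁+1}, y^{b₁+1}, z^{c+1}) ∩ (x^{a₂+1}, y^{b₂+1}, z^{c+1}) = (x^{a₁+1}, y^{b₂+1}, z^{c+1}, x^{a₂+1} y^{b₁+1}). -/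
open MvPolynomial

lemma finsupp_add_single_le_iff (a b : ℕ) (d : Fin 3 →₀ ℕ) :
    Finsupp.single 0 a + Finsupp.single 1 b ≤ d ↔ a ≤ d 0 ∧ b ≤ d 1 := by
  rw [Finsupp.le_def]
  constructor
  · intro h
    refine ⟨?_, ?_⟩
    · simpa using h 0
    · simpa using h 1
  · rintro ⟨h0, h1⟩ i
    fin_cases i <;> simp [Finsupp.single_apply] <;> omega

/-- For `a₁ > a₂ ≥ 0`, `b₂ > b₁ ≥ 0`, `c ≥ 0` in `K[x,y,z]`:
`(x^{a₁+1}, y^{b₁+1}, z^{c+1}) ∩ (x^{a₂+1}, y^{b₂+1}, z^{c+1})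
  = (x^{a₁+1}, y^{b₂+1}, z^{c+1}, x^{a₂+1} y^{b₁+1})`. -/
theorem monomial_ideal_intersection_four_gens (K : Type*) [Field K]
    (a₁ a₂ b₁ b₂ c : ℕ) (ha : a₂ < a₁) (hb : b₁ < b₂) :
    (Ideal.span {(X 0 : MvPolynomial (Fin 3) K) ^ (a₁ + 1), X 1 ^ (b₁ + 1),
        X 2 ^ (c + 1)} ⊓
      Ideal.span {(X 0 : MvPolynomial (Fin 3) K) ^ (a₂ + 1), X 1 ^ (b₂ + 1),
        X 2 ^ (c + 1)}) =
    Ideal.span {(X 0 : MvPolynomial (Fin 3) K) ^ (a₁ + 1), X 1 ^ (b₂ + 1),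
      X 2 ^ (c + 1), X 0 ^ (a₂ + 1) * X 1 ^ (b₁ + 1)} := by
  have e1 : ({(X 0 : MvPolynomial (Fin 3) K) ^ (a₁ + 1), X 1 ^ (b₁ + 1), X 2 ^ (c + 1)} :
      Set (MvPolynomial (Fin 3) K)) = (fun s => monomial s (1 : K)) ''
      {Finsupp.single 0 (a₁ + 1), Finsupp.single 1 (b₁ + 1), Finsupp.single 2 (c + 1)} := by
    simp [Set.image_insert_eq, X_pow_eq_monomial]
  have e2 : ({(X 0 : MvPolynomial (Fin 3) K) ^ (a₂ + 1), X 1 ^ (b₂ + 1), X 2 ^ (c + 1)} :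
      Set (MvPolynomial (Fin 3) K)) = (fun s => monomial s (1 : K)) ''
      {Finsupp.single 0 (a₂ + 1), Finsupp.single 1 (b₂ + 1), Finsupp.single 2 (c + 1)} := by
    simp [Set.image_insert_eq, X_pow_eq_monomial]
  have e3 : ({(X 0 : MvPolynomial (Fin 3) K) ^ (a₁ + 1), X 1 ^ (b₂ + 1), X 2 ^ (c + 1),
      X 0 ^ (a₂ + 1) * X 1 ^ (b₁ + 1)} : Set (MvPolynomial (Fin 3) K)) =
      (fun s => monomial s (1 : K)) ''
      {Finsupp.single 0 (a₁ + 1), Finsupp.single 1 (b₂ + 1), Finsupp.single 2 (c + 1),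
        Finsupp.single 0 (a₂ + 1) + Finsupp.single 1 (b₁ + 1)} := by
    simp only [Set.image_insert_eq, Set.image_singleton, X_pow_eq_monomial, monomial_mul,
      one_mul]
  ext p
  rw [Ideal.mem_inf, e1, e2, e3, mem_ideal_span_monomial_image,
    mem_ideal_span_monomial_image, mem_ideal_span_monomial_image, ← forall_and]
  refine forall_congr' fun d => ?_
  constructor
  · rintro ⟨h1, h2⟩ hd
    obtain ⟨s1, hs1, hle1⟩ := h1 hd
    obtain ⟨s2, hs2, hle2⟩ := h2 hd
    simp only [Set.mem_insert_iff, Set.mem_singleton_iff] at hs1 hs2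
    simp only [Set.mem_insert_iff, Set.mem_singleton_iff, exists_eq_or_imp, exists_eq_left,
      Finsupp.single_le_iff, finsupp_add_single_le_iff]
    rcases hs1 with rfl | rfl | rfl <;> rcases hs2 with rfl | rfl | rfl <;>
      rw [Finsupp.single_le_iff] at hle1 hle2 <;> omega
  · intro h
    constructor <;> intro hd <;> obtain ⟨s, hs, hle⟩ := h hd <;>
      simp only [Set.mem_insert_iff, Set.mem_singleton_iff] at hs <;>
      simp only [Set.mem_insert_iff, Set.mem_singleton_iff, exists_eq_or_imp, exists_eq_left,
        Finsupp.single_le_iff] <;>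
      [rcases hs with rfl | rfl | rfl | rfl; rcases hs with rfl | rfl | rfl | rfl] <;>
      first
        | (rw [Finsupp.single_le_iff] at hle; omega)
        | (rw [finsupp_add_single_le_iff] at hle; omega)
end

section
/- Let a₁ > a₂ ≥ 0, b₂ > b₁ ≥ 0, c₂ > c₁ ≥ 0 be integers. Then in K[x,y,z]: (x^{a₁+1}, y^{b₁+1}, z^{c₁+1}) ∩ (x^{a₂+1}, y^{b₂+1}, z^{c₂+1}) = (x^{a₁+1}, y^{b₂+1}, z^{c₂+1}, x^{a₂+1} y^{b₁+1}, x^{a₂+1} z^{c₁+1}). -/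
open MvPolynomial

lemma pair_le_iff {p q : ℕ} {i j : Fin 3} (hij : i ≠ j) {d : Fin 3 →₀ ℕ} :
    Finsupp.single i p + Finsupp.single j q ≤ d ↔ p ≤ d i ∧ q ≤ d j := by
  rw [Finsupp.le_def]
  simp only [Finsupp.add_apply, Finsupp.single_apply]
  constructor
  · intro h
    have hi := h i
    have hj := h j
    rw [if_pos rfl, if_neg (Ne.symm hij)] at hi
    rw [if_pos rfl, if_neg hij] at hj
    omega
  · rintro ⟨h1, h2⟩ k
    by_cases hik : i = k
    · subst hik
      rw [if_pos rfl, if_neg (Ne.symm hij)]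
      omega
    · rw [if_neg hik]
      by_cases hjk : j = k
      · subst hjk
        rw [if_pos rfl]
        omega
      · rw [if_neg hjk]
        omega

/-- For `a₁ > a₂ ≥ 0`, `b₂ > b₁ ≥ 0`, `c₂ > c₁ ≥ 0` in `K[x,y,z]`:
`(x^{a₁+1}, y^{b₁+1}, z^{c₁+1}) ∩ (x^{a₂+1}, y^{b₂+1}, z^{c₂+1})
  = (x^{a₁+1}, y^{b₂+1}, z^{c₂+1}, x^{a₂+1} y^{b₁+1}, x^{a₂+1} z^{c₁+1})`. -/
theorem monomial_ideal_intersection_five_gens (K : Type*) [Field K]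
    (a₁ a₂ b₁ b₂ c₁ c₂ : ℕ) (ha : a₂ < a₁) (hb : b₁ < b₂) (hc : c₁ < c₂) :
    (Ideal.span {(X 0 : MvPolynomial (Fin 3) K) ^ (a₁ + 1), X 1 ^ (b₁ + 1),
        X 2 ^ (c₁ + 1)} ⊓
      Ideal.span {(X 0 : MvPolynomial (Fin 3) K) ^ (a₂ + 1), X 1 ^ (b₂ + 1),
        X 2 ^ (c₂ + 1)}) =
    Ideal.span {(X 0 : MvPolynomial (Fin 3) K) ^ (a₁ + 1), X 1 ^ (b₂ + 1),
      X 2 ^ (c₂ + 1), X 0 ^ (a₂ + 1) * X 1 ^ (b₁ + 1),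
      X 0 ^ (a₂ + 1) * X 2 ^ (c₁ + 1)} := by
  have e1 : ({(X 0 : MvPolynomial (Fin 3) K) ^ (a₁ + 1), X 1 ^ (b₁ + 1), X 2 ^ (c₁ + 1)} :
      Set (MvPolynomial (Fin 3) K)) = (fun s => monomial s (1 : K)) ''
      {Finsupp.single 0 (a₁ + 1), Finsupp.single 1 (b₁ + 1), Finsupp.single 2 (c₁ + 1)} := by
    simp [Set.image_insert_eq, X_pow_eq_monomial]
  have e2 : ({(X 0 : MvPolynomial (Fin 3) K) ^ (a₂ + 1), X 1 ^ (b₂ + 1), X 2 ^ (c₂ + 1)} :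
      Set (MvPolynomial (Fin 3) K)) = (fun s => monomial s (1 : K)) ''
      {Finsupp.single 0 (a₂ + 1), Finsupp.single 1 (b₂ + 1), Finsupp.single 2 (c₂ + 1)} := by
    simp [Set.image_insert_eq, X_pow_eq_monomial]
  have e3 : ({(X 0 : MvPolynomial (Fin 3) K) ^ (a₁ + 1), X 1 ^ (b₂ + 1), X 2 ^ (c₂ + 1),
      X 0 ^ (a₂ + 1) * X 1 ^ (b₁ + 1), X 0 ^ (a₂ + 1) * X 2 ^ (c₁ + 1)} :
      Set (MvPolynomial (Fin 3) K)) = (fun s => monomial s (1 : K)) ''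
      {Finsupp.single 0 (a₁ + 1), Finsupp.single 1 (b₂ + 1), Finsupp.single 2 (c₂ + 1),
       Finsupp.single 0 (a₂ + 1) + Finsupp.single 1 (b₁ + 1),
       Finsupp.single 0 (a₂ + 1) + Finsupp.single 2 (c₁ + 1)} := by
    simp [Set.image_insert_eq, X_pow_eq_monomial, monomial_mul]
  rw [e1, e2, e3]
  ext f
  rw [Ideal.mem_inf]
  simp only [mem_ideal_span_monomial_image]
  have m1 : ∀ d : Fin 3 →₀ ℕ,
      (∃ si ∈ ({Finsupp.single 0 (a₁ + 1), Finsupp.single 1 (b₁ + 1),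
        Finsupp.single 2 (c₁ + 1)} : Set (Fin 3 →₀ ℕ)), si ≤ d) ↔
      (a₁ + 1 ≤ d 0 ∨ b₁ + 1 ≤ d 1 ∨ c₁ + 1 ≤ d 2) := by
    intro d
    constructor
    · rintro ⟨s, hs, hle⟩
      simp only [Set.mem_insert_iff, Set.mem_singleton_iff] at hs
      rcases hs with rfl | rfl | rfl
      · exact Or.inl (Finsupp.single_le_iff.mp hle)
      · exact Or.inr (Or.inl (Finsupp.single_le_iff.mp hle))
      · exact Or.inr (Or.inr (Finsupp.single_le_iff.mp hle))
    · rintro (h | h | h)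
      · exact ⟨_, by simp, Finsupp.single_le_iff.mpr h⟩
      · exact ⟨_, by simp, Finsupp.single_le_iff.mpr h⟩
      · exact ⟨_, by simp, Finsupp.single_le_iff.mpr h⟩
  have m2 : ∀ d : Fin 3 →₀ ℕ,
      (∃ si ∈ ({Finsupp.single 0 (a₂ + 1), Finsupp.single 1 (b₂ + 1),
        Finsupp.single 2 (c₂ + 1)} : Set (Fin 3 →₀ ℕ)), si ≤ d) ↔
      (a₂ + 1 ≤ d 0 ∨ b₂ + 1 ≤ d 1 ∨ c₂ + 1 ≤ d 2) := by
    intro d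
    constructor
    · rintro ⟨s, hs, hle⟩
      simp only [Set.mem_insert_iff, Set.mem_singleton_iff] at hs
      rcases hs with rfl | rfl | rfl
      · exact Or.inl (Finsupp.single_le_iff.mp hle)
      · exact Or.inr (Or.inl (Finsupp.single_le_iff.mp hle))
      · exact Or.inr (Or.inr (Finsupp.single_le_iff.mp hle))
    · rintro (h | h | h)
      · exact ⟨_, by simp, Finsupp.single_le_iff.mpr h⟩
      · exact ⟨_, by simp, Finsupp.single_le_iff.mpr h⟩
      · exact ⟨_, by simp, Finsupp.single_le_iff.mpr h⟩
  have h01 : (0 : Fin 3) ≠ 1 := by decide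
  have h02 : (0 : Fin 3) ≠ 2 := by decide
  have m3 : ∀ d : Fin 3 →₀ ℕ,
      (∃ si ∈ ({Finsupp.single 0 (a₁ + 1), Finsupp.single 1 (b₂ + 1), Finsupp.single 2 (c₂ + 1),
        Finsupp.single 0 (a₂ + 1) + Finsupp.single 1 (b₁ + 1),
        Finsupp.single 0 (a₂ + 1) + Finsupp.single 2 (c₁ + 1)} : Set (Fin 3 →₀ ℕ)), si ≤ d) ↔
      (a₁ + 1 ≤ d 0 ∨ b₂ + 1 ≤ d 1 ∨ c₂ + 1 ≤ d 2 ∨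
        (a₂ + 1 ≤ d 0 ∧ b₁ + 1 ≤ d 1) ∨ (a₂ + 1 ≤ d 0 ∧ c₁ + 1 ≤ d 2)) := by
    intro d
    constructor
    · rintro ⟨s, hs, hle⟩
      simp only [Set.mem_insert_iff, Set.mem_singleton_iff] at hs
      rcases hs with rfl | rfl | rfl | rfl | rfl
      · exact Or.inl (Finsupp.single_le_iff.mp hle)
      · exact Or.inr (Or.inl (Finsupp.single_le_iff.mp hle))
      · exact Or.inr (Or.inr (Or.inl (Finsupp.single_le_iff.mp hle)))
      · exact Or.inr (Or.inr (Or.inr (Or.inl ((pair_le_iff h01).mp hle))))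
      · exact Or.inr (Or.inr (Or.inr (Or.inr ((pair_le_iff h02).mp hle))))
    · rintro (h | h | h | h | h)
      · exact ⟨_, by simp, Finsupp.single_le_iff.mpr h⟩
      · exact ⟨_, by simp, Finsupp.single_le_iff.mpr h⟩
      · exact ⟨_, by simp, Finsupp.single_le_iff.mpr h⟩
      · exact ⟨_, by simp, (pair_le_iff h01).mpr h⟩
      · exact ⟨_, by simp, (pair_le_iff h02).mpr h⟩
  simp only [m1, m2, m3]
  constructor
  · rintro ⟨h1, h2⟩ d hd
    have A := h1 d hd
    have B := h2 d hd
    omega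
  · intro h
    refine ⟨fun d hd => ?_, fun d hd => ?_⟩ <;> · have := h d hd; omega
end

section
/- Let p, q, n be nonnegative integers with n ≥ 1, and let M be the n×n matrix over the rationals with entries M_{i,j} = C(p, q + j − i) (binomial coefficient, taken to be 0 when q + j − i < 0 or q + j − i > p). Then det M = Mac(n, p−q, q) = H(n)·H(p−q)·H(q)·H(n+p) / (H(n+p−q)·H(n+q)·H(p)), provided q ≤ p. -/
open Finset

lemma hyperfac_pos (n : ℕ) : 0 < hyperfac n :=
  Finset.prod_pos fun i _ => Nat.factorial_pos i

lemma fact_prod_range (c : ℕ) : ∀ m : ℕ,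
    c.factorial * ∏ t ∈ range m, (c + 1 + t) = (c + m).factorial
  | 0 => by simp
  | m + 1 => by
    rw [prod_range_succ, ← mul_assoc, fact_prod_range c m]
    rw [show c + (m + 1) = (c + m) + 1 by ring, Nat.factorial_succ]
    ring

lemma hyperfac_add_prod (a : ℕ) : ∀ n : ℕ,
    hyperfac (a + n) = hyperfac a * ∏ i ∈ range n, (a + i).factorial
  | 0 => by simp [hyperfac]
  | n + 1 => by
    rw [show a + (n + 1) = (a + n) + 1 by ring]
    rw [show hyperfac (a + n + 1) = hyperfac (a + n) * (a + n).factorial from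
      Finset.prod_range_succ _ _, hyperfac_add_prod a n, prod_range_succ]
    ring

lemma pow_prod_fact (p : ℕ) : ∀ m : ℕ,
    ∏ i ∈ range (m + 1), (p + i).factorial =
      p.factorial ^ (m + 1) * ∏ k ∈ range m, (p + 1 + k) ^ (m - k)
  | 0 => by simp
  | m + 1 => by
    have h2 : ∀ k ∈ range (m + 1), (p + 1 + k) ^ (m + 1 - k)
        = (p + 1 + k) ^ (m - k) * (p + 1 + k) := by
      intro k hk
      rw [mem_range] at hk
      rw [show m + 1 - k = (m - k) + 1 by omega, pow_succ]
    have h1 : ∏ k ∈ range (m + 1), (p + 1 + k) ^ (m + 1 - k) =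
        (∏ k ∈ range m, (p + 1 + k) ^ (m - k)) * ∏ k ∈ range (m + 1), (p + 1 + k) := by
      rw [Finset.prod_congr rfl h2, Finset.prod_mul_distrib]
      congr 1
      rw [prod_range_succ, Nat.sub_self, pow_zero, mul_one]
    have h3 : p.factorial * ∏ k ∈ range (m + 1), (p + 1 + k) = (p + (m + 1)).factorial :=
      fact_prod_range p (m + 1)
    rw [prod_range_succ, pow_prod_fact p m, h1, ← h3]
    ring

lemma reindex_Ioo (j n : ℕ) (f : ℕ → ℕ) :
    ∏ u ∈ Finset.Ioo j n, f u = ∏ t ∈ range (n - 1 - j), f (j + 1 + t) := by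
  refine Finset.prod_nbij' (fun u => u - (j + 1)) (fun t => j + 1 + t) ?_ ?_ ?_ ?_ ?_
  · intro u hu; simp only [Finset.mem_Ioo] at hu; simp only [mem_range]; omega
  · intro t ht; simp only [mem_range] at ht; simp only [Finset.mem_Ioo]; omega
  · intro u hu; simp only [Finset.mem_Ioo] at hu; omega
  · intro t ht; simp only [mem_range] at ht; omega
  · intro u hu; simp only [Finset.mem_Ioo] at hu; congr 1; omega

lemma reindex_Icc (j : ℕ) (f : ℕ → ℕ) :
    ∏ u ∈ Finset.Icc 1 j, f u = ∏ t ∈ range j, f (j - t) := by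
  refine Finset.prod_nbij' (fun u => j - u) (fun t => j - t) ?_ ?_ ?_ ?_ ?_
  · intro u hu; simp only [Finset.mem_Icc] at hu; simp only [mem_range]; omega
  · intro t ht; simp only [mem_range] at ht; simp only [Finset.mem_Icc]; omega
  · intro u hu; simp only [Finset.mem_Icc] at hu; omega
  · intro t ht; simp only [mem_range] at ht; omega
  · intro u hu; simp only [Finset.mem_Icc] at hu; congr 1; omega

/-- The intermediate matrices in the column-telescoping argument. -/
def Mmat (n p q k : ℕ) : Matrix (Fin n) (Fin n) ℚ :=
  Matrix.of fun i j =>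
    (∏ u ∈ Finset.Ioo (j : ℕ) n, ((q : ℚ) + u - (i : ℕ))) *
      ∏ u ∈ Finset.Icc 1 ((j : ℕ) - k), ((p : ℚ) - q + 1 - u + (i : ℕ))

lemma Mmat_round (m p q k : ℕ) :
    (Mmat (m + 1) p q k).det =
      ((p : ℚ) + 1 + k) ^ (m - k) * (Mmat (m + 1) p q (k + 1)).det := by
  set s : ℚ := (p : ℚ) + 1 + k with hs
  set B : Matrix (Fin (m + 1)) (Fin (m + 1)) ℚ :=
    Matrix.of fun i j => (if (j : ℕ) ≤ k then 1 else s) * Mmat (m + 1) p q (k + 1) i j with hB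
  have hdet : (Mmat (m + 1) p q k).det = B.det := by
    apply Matrix.det_eq_of_forall_col_eq_smul_add_pred
      (fun j => if (j : ℕ) + 1 ≤ k then 0 else -1)
    · intro i
      simp only [hB, Matrix.of_apply, Mmat, Fin.val_zero]
      simp only [Nat.zero_le, ↓reduceIte, one_mul]
      norm_num
    · intro i j
      by_cases hjk : (j : ℕ) + 1 ≤ k
      · rw [if_pos hjk]
        simp only [hB, Matrix.of_apply, Mmat, Fin.val_succ]
        rw [if_pos hjk, one_mul, zero_mul, add_zero]
        rw [show (j : ℕ) + 1 - k = 0 by omega, show (j : ℕ) + 1 - (k + 1) = 0 by omega]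
      · rw [if_neg hjk]
        simp only [hB, Matrix.of_apply, Mmat, Fin.val_succ, Fin.coe_castSucc]
        rw [if_neg hjk]
        have hkj : k ≤ (j : ℕ) := by omega
        set d : ℕ := (j : ℕ) - k with hd
        have hdq : ((d : ℚ)) = (j : ℚ) - k := by
          rw [hd]; push_cast [Nat.cast_sub hkj]; ring
        rw [show (j : ℕ) + 1 - k = d + 1 by omega, show (j : ℕ) + 1 - (k + 1) = d by omega]
        have hsplit : ∏ u ∈ Finset.Icc 1 (d + 1), ((p : ℚ) - q + 1 - u + (i : ℕ))
            = (∏ u ∈ Finset.Icc 1 d, ((p : ℚ) - q + 1 - u + (i : ℕ)))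
              * ((p : ℚ) - q + 1 - ((d : ℕ) + 1 : ℕ) + (i : ℕ)) := by
          rw [Finset.prod_Icc_succ_top (by omega)]
        have hins : Finset.Ioo (j : ℕ) (m + 1) =
            insert ((j : ℕ) + 1) (Finset.Ioo ((j : ℕ) + 1) (m + 1)) := by
          ext u; simp only [Finset.mem_Ioo, Finset.mem_insert]
          have := j.isLt; omega
        have hprod : ∏ u ∈ Finset.Ioo (j : ℕ) (m + 1), ((q : ℚ) + u - (i : ℕ))
            = ((q : ℚ) + (((j : ℕ) : ℚ) + 1) - (i : ℕ)) *
              ∏ u ∈ Finset.Ioo ((j : ℕ) + 1) (m + 1), ((q : ℚ) + u - (i : ℕ)) := by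
          rw [hins, Finset.prod_insert (by simp)]
          congr 1
          push_cast
          ring
        rw [hsplit, hprod]
        have hkey : ((p : ℚ) - q + 1 - ((d : ℕ) + 1 : ℕ) + (i : ℕ))
            + ((q : ℚ) + (((j : ℕ) : ℚ) + 1) - (i : ℕ)) = s := by
          push_cast [hdq, hs]; ring
        set P1 : ℚ := ∏ u ∈ Finset.Ioo ((j : ℕ) + 1) (m + 1), ((q : ℚ) + u - (i : ℕ))
        set P2 : ℚ := ∏ u ∈ Finset.Icc 1 d, ((p : ℚ) - q + 1 - u + (i : ℕ))
        linear_combination (P1 * P2) * hkey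
  rw [hdet, hB]
  rw [Matrix.det_mul_row]
  congr 1
  rw [Fin.prod_univ_eq_prod_range (fun j => if j ≤ k then (1 : ℚ) else s)]
  rw [Finset.prod_ite, Finset.prod_const, Finset.prod_const, one_pow, one_mul]
  congr 1
  rw [show Finset.filter (fun j => ¬ j ≤ k) (range (m + 1)) = Finset.Ico (k + 1) (m + 1) from by
    ext u; simp only [Finset.mem_filter, mem_range, Finset.mem_Ico, not_le]; omega]
  rw [Nat.card_Ico]
  omega

lemma Mmat_chain (m p q : ℕ) : ∀ t : ℕ,
    (Mmat (m + 1) p q 0).det =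
      (∏ k ∈ range t, ((p : ℚ) + 1 + k) ^ (m - k)) * (Mmat (m + 1) p q t).det
  | 0 => by simp
  | t + 1 => by
    rw [Mmat_chain m p q t, Mmat_round m p q t, prod_range_succ]
    ring

open Polynomial in
lemma Mmat_last (m p q : ℕ) :
    (Mmat (m + 1) p q m).det = (Nat.superFactorial m : ℚ) := by
  have hsub := Matrix.det_submatrix_equiv_self (Fin.revPerm : Equiv.Perm (Fin (m + 1)))
    (Mmat (m + 1) p q m)
  rw [← hsub]
  set ps : Fin (m + 1) → ℚ[X] := fun j =>
    ∏ u ∈ Finset.Ioo (m - (j : ℕ)) (m + 1), (X + C ((q : ℚ) + u - m)) with hps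
  have hmonic : ∀ j, (ps j).Monic := fun j =>
    monic_prod_of_monic _ _ fun u _ => monic_X_add_C _
  have hdeg : ∀ j : Fin (m + 1), (ps j).natDegree = (j : ℕ) := by
    intro j
    rw [hps]
    rw [Polynomial.natDegree_prod _ _ (fun u _ => X_add_C_ne_zero _)]
    have hj := j.isLt
    simp only [natDegree_X_add_C]
    rw [Finset.sum_const, Nat.card_Ioo, smul_eq_mul, mul_one]
    omega
  have hentry : (Mmat (m + 1) p q m).submatrix Fin.revPerm Fin.revPerm
      = Matrix.of fun i j : Fin (m + 1) => (ps j).eval (((i : ℕ) : ℚ)) := by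
    ext i j
    simp only [Matrix.submatrix_apply, Mmat, Matrix.of_apply]
    have hrevj : ((Fin.revPerm j : Fin (m + 1)) : ℕ) = m - (j : ℕ) := by
      rw [show (Fin.revPerm j : Fin (m + 1)) = Fin.rev j from rfl, Fin.val_rev]
      omega
    have hrevi : ((Fin.revPerm i : Fin (m + 1)) : ℕ) = m - (i : ℕ) := by
      rw [show (Fin.revPerm i : Fin (m + 1)) = Fin.rev i from rfl, Fin.val_rev]
      omega
    rw [hrevj, hrevi]
    rw [show Finset.Icc 1 ((m - (j : ℕ)) - m) = ∅ from by
      rw [show (m - (j : ℕ)) - m = 0 by omega]; simp]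
    rw [Finset.prod_empty, mul_one, hps, eval_prod]
    apply Finset.prod_congr rfl
    intro u hu
    simp only [eval_add, eval_X, eval_C]
    have hic : ((m - (i : ℕ) : ℕ) : ℚ) = (m : ℚ) - ((i : ℕ) : ℚ) := by
      have := i.isLt
      push_cast [Nat.cast_sub (show (i : ℕ) ≤ m by omega)]
      ring
    rw [hic]; ring
  rw [hentry,
    ← Matrix.det_eval_matrixOfPolynomials_eq_det_vandermonde
      (fun i : Fin (m + 1) => ((i : ℕ) : ℚ)) ps hdeg hmonic]
  exact_mod_cast Matrix.det_vandermonde_id_eq_superFactorial (R := ℚ) m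

lemma pointwise (m p q : ℕ) (hq : q ≤ p) (i j : Fin (m + 1)) :
    (((q + m - (i : ℕ)).factorial * (p - q + (i : ℕ)).factorial : ℕ) : ℚ) / (p.factorial : ℚ) *
      (if (i : ℕ) ≤ q + (j : ℕ)
        then (Nat.choose p (q + (j : ℕ) - (i : ℕ)) : ℚ) else 0)
    = Mmat (m + 1) p q 0 i j := by
  simp only [Mmat, Matrix.of_apply, Nat.sub_zero]
  by_cases hij : (i : ℕ) ≤ q + (j : ℕ)
  · rw [if_pos hij]
    by_cases hp : q + (j : ℕ) - (i : ℕ) ≤ p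
    · -- main case
      have hj := j.isLt
      have hi := i.isLt
      have h1 : (q + (j : ℕ) - (i : ℕ)).factorial *
          ∏ u ∈ Finset.Ioo (j : ℕ) (m + 1), (q + u - (i : ℕ)) = (q + m - (i : ℕ)).factorial := by
        rw [reindex_Ioo]
        rw [Finset.prod_congr rfl (show ∀ t ∈ range ((m + 1) - 1 - (j : ℕ)),
          q + ((j : ℕ) + 1 + t) - (i : ℕ) = (q + (j : ℕ) - (i : ℕ)) + 1 + t from
          fun t _ => by omega)]
        rw [fact_prod_range]
        congr 1; omega
      have h2 : (p - (q + (j : ℕ) - (i : ℕ))).factorial *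
          ∏ u ∈ Finset.Icc 1 (j : ℕ), (p + 1 + (i : ℕ) - q - u) = (p - q + (i : ℕ)).factorial := by
        rw [reindex_Icc]
        rw [Finset.prod_congr rfl (show ∀ t ∈ range (j : ℕ),
          p + 1 + (i : ℕ) - q - ((j : ℕ) - t) = (p - (q + (j : ℕ) - (i : ℕ))) + 1 + t from
          fun t ht => by simp only [mem_range] at ht; omega)]
        rw [fact_prod_range]
        congr 1; omega
      have c1 : (∏ u ∈ Finset.Ioo (j : ℕ) (m + 1), ((q : ℚ) + u - (i : ℕ)))
          = ((∏ u ∈ Finset.Ioo (j : ℕ) (m + 1), (q + u - (i : ℕ)) : ℕ) : ℚ) := by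
        rw [Nat.cast_prod]
        apply Finset.prod_congr rfl
        intro u hu
        simp only [Finset.mem_Ioo] at hu
        push_cast [Nat.cast_sub (show (i : ℕ) ≤ q + u by omega)]
        ring
      have c2 : (∏ u ∈ Finset.Icc 1 (j : ℕ), ((p : ℚ) - q + 1 - u + (i : ℕ)))
          = ((∏ u ∈ Finset.Icc 1 (j : ℕ), (p + 1 + (i : ℕ) - q - u) : ℕ) : ℚ) := by
        rw [Nat.cast_prod]
        apply Finset.prod_congr rfl
        intro u hu
        simp only [Finset.mem_Icc] at hu
        rw [show p + 1 + (i : ℕ) - q - u = p + 1 + (i : ℕ) - (q + u) by omega]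
        push_cast [Nat.cast_sub (show q + u ≤ p + 1 + (i : ℕ) by omega)]
        ring
      rw [Nat.cast_choose ℚ hp, c1, c2]
      have e1 : ((q + m - (i : ℕ)).factorial : ℚ) = ((q + (j : ℕ) - (i : ℕ)).factorial : ℚ) *
          ((∏ u ∈ Finset.Ioo (j : ℕ) (m + 1), (q + u - (i : ℕ)) : ℕ) : ℚ) := by
        exact_mod_cast congrArg (fun x : ℕ => (x : ℚ)) h1.symm
      have e2 : ((p - q + (i : ℕ)).factorial : ℚ) = ((p - (q + (j : ℕ) - (i : ℕ))).factorial : ℚ) *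
          ((∏ u ∈ Finset.Icc 1 (j : ℕ), (p + 1 + (i : ℕ) - q - u) : ℕ) : ℚ) := by
        exact_mod_cast congrArg (fun x : ℕ => (x : ℚ)) h2.symm
      rw [Nat.cast_mul, e1, e2]
      have hf1 : ((p.factorial : ℚ)) ≠ 0 := Nat.cast_ne_zero.mpr (Nat.factorial_ne_zero p)
      have hf2 : (((q + (j : ℕ) - (i : ℕ)).factorial : ℚ)) ≠ 0 :=
        Nat.cast_ne_zero.mpr (Nat.factorial_ne_zero _)
      have hf3 : (((p - (q + (j : ℕ) - (i : ℕ))).factorial : ℚ)) ≠ 0 :=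
        Nat.cast_ne_zero.mpr (Nat.factorial_ne_zero _)
      field_simp
    · -- choose = 0
      rw [Nat.choose_eq_zero_of_lt (by omega), Nat.cast_zero, mul_zero]
      symm
      have hmem : p - q + (i : ℕ) + 1 ∈ Finset.Icc 1 (j : ℕ) := by
        simp only [Finset.mem_Icc]; omega
      rw [Finset.prod_eq_zero hmem (show ((p : ℚ)) - q + 1 - ((p - q + (i : ℕ) + 1 : ℕ) : ℚ)
          + (i : ℕ) = 0 from by push_cast [Nat.cast_sub hq]; ring), mul_zero]
  · rw [if_neg hij, mul_zero]
    symm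
    have hqi : q ≤ (i : ℕ) := by omega
    have hmem : (i : ℕ) - q ∈ Finset.Ioo (j : ℕ) (m + 1) := by
      simp only [Finset.mem_Ioo]
      have := i.isLt; omega
    rw [Finset.prod_eq_zero hmem (show ((q : ℚ)) + (((i : ℕ) - q : ℕ) : ℚ) - (i : ℕ) = 0 from by
      push_cast [Nat.cast_sub hqi]; ring), zero_mul]

lemma nat_main (m p q : ℕ) (hq : q ≤ p) :
    Nat.superFactorial m * (∏ k ∈ range m, (p + 1 + k) ^ (m - k)) * p.factorial ^ (m + 1) *
        (hyperfac (m + 1 + p - q) * hyperfac (m + 1 + q) * hyperfac p)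
      = hyperfac (m + 1) * hyperfac (p - q) * hyperfac q * hyperfac (m + 1 + p) *
        (∏ i ∈ range (m + 1), ((q + m - i).factorial * (p - q + i).factorial)) := by
  rw [Finset.prod_mul_distrib]
  have hNA : (∏ i ∈ range (m + 1), (q + m - i).factorial)
      = ∏ i ∈ range (m + 1), (q + i).factorial := by
    rw [← Finset.prod_range_reflect (fun i => (q + i).factorial) (m + 1)]
    apply Finset.prod_congr rfl
    intro i hi
    simp only [mem_range] at hi
    congr 1; omega
  rw [hNA]
  rw [show m + 1 + p - q = (p - q) + (m + 1) by omega,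
    show m + 1 + q = q + (m + 1) by omega,
    show m + 1 + p = p + (m + 1) by omega]
  rw [hyperfac_add_prod (p - q) (m + 1), hyperfac_add_prod q (m + 1),
    hyperfac_add_prod p (m + 1)]
  rw [show hyperfac (m + 1) = Nat.superFactorial m from Nat.prod_range_succ_factorial m]
  rw [pow_prod_fact p m]
  ring

/-- The determinant of the `n × n` matrix with entries `C(p, q + j − i)`
(interpreted as `0` when `q + j − i < 0`, and automatically `0` when
`q + j − i > p`) equals `Mac(n, p−q, q)`, provided `q ≤ p` and `n ≥ 1`. -/
theorem det_binomial_matrix (n p q : ℕ) (hn : 1 ≤ n) (hq : q ≤ p) :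
    (Matrix.of fun i j : Fin n =>
        if (i : ℕ) ≤ q + (j : ℕ)
          then (Nat.choose p (q + (j : ℕ) - (i : ℕ)) : ℚ)
          else 0).det =
      (hyperfac n * hyperfac (p - q) * hyperfac q * hyperfac (n + p) : ℚ) /
        (hyperfac (n + p - q) * hyperfac (n + q) * hyperfac p : ℚ) := by
  obtain ⟨m, rfl⟩ : ∃ m, n = m + 1 := ⟨n - 1, by omega⟩
  set D : Matrix (Fin (m + 1)) (Fin (m + 1)) ℚ :=
    Matrix.of fun i j : Fin (m + 1) =>
      if (i : ℕ) ≤ q + (j : ℕ)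
        then (Nat.choose p (q + (j : ℕ) - (i : ℕ)) : ℚ)
        else 0 with hD
  set v : Fin (m + 1) → ℚ := fun i =>
    (((q + m - (i : ℕ)).factorial * (p - q + (i : ℕ)).factorial : ℕ) : ℚ) / (p.factorial : ℚ)
    with hv
  have hpoint : (Matrix.of fun i j => v i * D i j) = Mmat (m + 1) p q 0 := by
    ext i j
    exact pointwise m p q hq i j
  have hdm : (∏ i, v i) * D.det = (Mmat (m + 1) p q 0).det := by
    rw [← hpoint]
    exact (Matrix.det_mul_column v D).symm
  have hchain := Mmat_chain m p q m
  rw [Mmat_last m p q] at hchain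
  -- product of v
  have hprodv : (∏ i, v i) =
      ((∏ i ∈ range (m + 1), ((q + m - i).factorial * (p - q + i).factorial) : ℕ) : ℚ) /
        (p.factorial : ℚ) ^ (m + 1) := by
    rw [hv, Fin.prod_univ_eq_prod_range
      (fun i => (((q + m - i).factorial * (p - q + i).factorial : ℕ) : ℚ) / (p.factorial : ℚ))]
    rw [Finset.prod_div_distrib, Finset.prod_const, card_range, Nat.cast_prod]
  have hvne : (∏ i, v i) ≠ 0 := by
    rw [hprodv]
    apply div_ne_zero
    · exact Nat.cast_ne_zero.mpr (Finset.prod_ne_zero_iff.mpr fun i _ =>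
        Nat.mul_ne_zero (Nat.factorial_ne_zero _) (Nat.factorial_ne_zero _))
    · exact pow_ne_zero _ (Nat.cast_ne_zero.mpr (Nat.factorial_ne_zero p))
  have hdet : D.det = ((Nat.superFactorial m : ℚ) *
      ∏ k ∈ range m, ((p : ℚ) + 1 + k) ^ (m - k)) / (∏ i, v i) := by
    rw [eq_div_iff hvne, mul_comm, hdm, hchain]
    ring
  rw [hdet, hprodv, div_div_eq_mul_div]
  have hX : (∏ k ∈ range m, ((p : ℚ) + 1 + k) ^ (m - k))
      = ((∏ k ∈ range m, (p + 1 + k) ^ (m - k) : ℕ) : ℚ) := by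
    push_cast; rfl
  rw [hX]
  have hden1 : ((∏ i ∈ range (m + 1), ((q + m - i).factorial * (p - q + i).factorial) : ℕ) : ℚ)
      ≠ 0 := Nat.cast_ne_zero.mpr (Finset.prod_ne_zero_iff.mpr fun i _ =>
        Nat.mul_ne_zero (Nat.factorial_ne_zero _) (Nat.factorial_ne_zero _))
  have hden2 : ((hyperfac (m + 1 + p - q) : ℚ) * (hyperfac (m + 1 + q) : ℚ) *
      (hyperfac p : ℚ)) ≠ 0 := by
    have h1 : (0 : ℚ) < hyperfac (m + 1 + p - q) := by exact_mod_cast hyperfac_pos _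
    have h2 : (0 : ℚ) < hyperfac (m + 1 + q) := by exact_mod_cast hyperfac_pos _
    have h3 : (0 : ℚ) < hyperfac p := by exact_mod_cast hyperfac_pos _
    exact ne_of_gt (mul_pos (mul_pos h1 h2) h3)
  rw [div_eq_div_iff hden1 hden2]
  exact_mod_cast nat_main m p q hq
end
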